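/- Let θ > 1, let ω ∈ (0,1) satisfy e^ω/(e^ω − 1) = (ln θ)/(1 − ω), let α = e^ω/(e^ω − 1), L > 0, U = L·θ, and define ψ : [0,1] → ℝ by ψ(x) = ((α − 1)·L/α)·e^x for x ∈ [0, ω) and ψ(x) = U·e^{α(x − 1)} for x ∈ [ω, 1]. Then for every y ∈ [ω, 1], ψ(y) ≤ ∫₀^y ψ(x) dx + (1 − 1/α)·ψ(y). -/

import Mathlib

open Real Set

theorem stmt_8 (θ ω α L U : ℝ) (hθ : 1 < θ) (hω : ω ∈ Set.Ioo (0:ℝ) 1)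
    (hωeq : Real.exp ω / (Real.exp ω - 1) = Real.log θ / (1 - ω))
    (hα : α = Real.exp ω / (Real.exp ω - 1))
    (hL : 0 < L) (hU : U = L * θ)
    (ψ : ℝ → ℝ)
    (hψ : ∀ x : ℝ, ψ x = if x < ω then ((α - 1) * L / α) * Real.exp x
      else U * Real.exp (α * (x - 1))) :
    ∀ y ∈ Set.Icc ω 1, ψ y ≤ (∫ x in (0:ℝ)..y, ψ x) + (1 - 1/α) * ψ y := by
  obtain ⟨hω0, hω1⟩ := hω
  intro y hy
  obtain ⟨hyω, hy1⟩ := hy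
  have hexp1 : (1:ℝ) < Real.exp ω := by
    calc (1:ℝ) = Real.exp 0 := by simp
    _ < Real.exp ω := Real.exp_lt_exp.2 hω0
  have hed : (0:ℝ) < Real.exp ω - 1 := by linarith
  have hα1 : 1 < α := by
    rw [hα]
    rw [lt_div_iff₀ hed]; linarith
  have hαpos : (0:ℝ) < α := by linarith
  have hαne : α ≠ 0 := ne_of_gt hαpos
  have hθ0 : (0:ℝ) < θ := by linarith
  -- α * (1 - ω) = log θ
  have h1ω : (1:ℝ) - ω ≠ 0 := by linarith
  have hαω : α * (1 - ω) = Real.log θ := by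
    rw [hα, hωeq]
    field_simp
  -- U * exp (α * (ω - 1)) = L
  have hUL : U * Real.exp (α * (ω - 1)) = L := by
    have h : α * (ω - 1) = - Real.log θ := by linarith [hαω]
    rw [h, Real.exp_neg, Real.exp_log hθ0, hU]
    field_simp
  -- c * exp ω = L where c = (α-1)*L/α
  have hcL : ((α - 1) * L / α) * Real.exp ω = L := by
    have h1 : (α - 1) * (Real.exp ω - 1) = 1 := by
      rw [hα]; field_simp; ring
    have h2 : α * (Real.exp ω - 1) = Real.exp ω := by
      rw [hα]; field_simp
    field_simp
    try nlinarith [h1, h2]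
  set c := (α - 1) * L / α with hc
  -- ψ y value
  have hψy : ψ y = U * Real.exp (α * (y - 1)) := by
    rw [hψ y, if_neg (not_lt.2 hyω)]
  -- integral split
  have hcont1 : ContinuousOn ψ (Set.uIcc 0 ω) := by
    apply ContinuousOn.congr (f := fun x => c * Real.exp x)
    · exact (continuous_const.mul Real.continuous_exp).continuousOn
    · intro x hx
      rw [Set.uIcc_of_le hω0.le] at hx
      rw [hψ x]
      rcases lt_or_eq_of_le hx.2 with h | h
      · rw [if_pos h]
      · rw [h, if_neg (lt_irrefl ω), hUL, ← hcL]
  have hcont2 : ContinuousOn ψ (Set.uIcc ω y) := by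
    apply ContinuousOn.congr (f := fun x => U * Real.exp (α * (x - 1)))
    · exact (continuous_const.mul (Real.continuous_exp.comp
        (continuous_const.mul (continuous_id.sub continuous_const)))).continuousOn
    · intro x hx
      rw [Set.uIcc_of_le hyω] at hx
      rw [hψ x, if_neg (not_lt.2 hx.1)]
  have hi1 : IntervalIntegrable ψ MeasureTheory.volume 0 ω := hcont1.intervalIntegrable
  have hi2 : IntervalIntegrable ψ MeasureTheory.volume ω y := hcont2.intervalIntegrable
  have hsplit : (∫ x in (0:ℝ)..y, ψ x) = (∫ x in (0:ℝ)..ω, ψ x) + ∫ x in ω..y, ψ x :=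
    (intervalIntegral.integral_add_adjacent_intervals hi1 hi2).symm
  -- first piece
  have hI1 : (∫ x in (0:ℝ)..ω, ψ x) = c * (Real.exp ω - 1) := by
    have heq : (∫ x in (0:ℝ)..ω, ψ x) = ∫ x in (0:ℝ)..ω, c * Real.exp x := by
      apply intervalIntegral.integral_congr
      intro x hx
      rw [Set.uIcc_of_le hω0.le] at hx
      rw [hψ x]
      rcases lt_or_eq_of_le hx.2 with h | h
      · rw [if_pos h]
      · rw [h, if_neg (lt_irrefl ω), hUL, ← hcL]
    rw [heq, intervalIntegral.integral_const_mul, integral_exp]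
    simp
  -- second piece via antiderivative
  have hI2 : (∫ x in ω..y, ψ x)
      = U / α * Real.exp (α * (y - 1)) - U / α * Real.exp (α * (ω - 1)) := by
    have heq : (∫ x in ω..y, ψ x) = ∫ x in ω..y, U * Real.exp (α * (x - 1)) := by
      apply intervalIntegral.integral_congr
      intro x hx
      rw [Set.uIcc_of_le hyω] at hx
      rw [hψ x, if_neg (not_lt.2 hx.1)]
    rw [heq]
    have hderiv : ∀ x ∈ Set.uIcc ω y,
        HasDerivAt (fun t => U / α * Real.exp (α * (t - 1))) (U * Real.exp (α * (x - 1))) x := by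
      intro x _
      have h1 : HasDerivAt (fun t : ℝ => α * (t - 1)) α x := by
        simpa using ((hasDerivAt_id x).sub_const 1).const_mul α
      have h2 := (h1.exp).const_mul (U / α)
      exact h2.congr_deriv (by rw [mul_comm (Real.exp _) α, ← mul_assoc, div_mul_cancel₀ U hαne])
    have hint : IntervalIntegrable (fun x => U * Real.exp (α * (x - 1)))
        MeasureTheory.volume ω y := by
      apply Continuous.intervalIntegrable
      exact continuous_const.mul (Real.continuous_exp.comp
        (continuous_const.mul (continuous_id.sub continuous_const)))
    exact intervalIntegral.integral_eq_sub_of_hasDerivAt hderiv hint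
  -- c * (exp ω - 1) = L / α and U/α * exp(α(ω-1)) = L/α
  have hc1 : c * (Real.exp ω - 1) = L / α := by
    have h1 : (α - 1) * (Real.exp ω - 1) = 1 := by
      rw [hα]; field_simp; ring
    rw [hc]
    field_simp
    try nlinarith [h1]
  have hc2 : U / α * Real.exp (α * (ω - 1)) = L / α := by
    rw [div_mul_eq_mul_div, hUL]
  have : (∫ x in (0:ℝ)..y, ψ x) = ψ y / α := by
    rw [hsplit, hI1, hI2, hc1, hc2, hψy]
    ring
  rw [this]
  have : ψ y / α + (1 - 1/α) * ψ y = ψ y := by field_simp; ring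
  linarith [this.le]
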